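/- Let A be an entrywise nonnegative real n×n matrix and let r be its Perron eigenvalue, i.e., r is an eigenvalue of A and r ≥ |λ| for every complex eigenvalue λ of A. Then there exists a real number k_A ≥ −r such that for every real ε ≥ k_A there exists an entrywise nonnegative real n×n matrix D with every row sum and every column sum equal to r + ε whose characteristic polynomial satisfies charpoly(D)·(t − r) = charpoly(A)·(t − (r + ε)); that is, the eigenvalue multiset of D is obtained from that of A by replacing one occurrence of r by r + ε. -/

import Mathlib

open Polynomial Matrix

variable {n : ℕ}

lemma evalCharpoly {F : Type*} [Field F] (M : Matrix (Fin n) (Fin n) F) (s : F) :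
    M.charpoly.eval s = (s • (1 : Matrix (Fin n) (Fin n) F) - M).det := by
  have : M.charpoly.eval s = (evalRingHom s) M.charpoly := rfl
  rw [this, Matrix.charpoly, RingHom.map_det]
  congr 1
  ext i j
  by_cases h : i = j
  · subst h
    simp [Matrix.charmatrix_apply_eq, Matrix.one_apply_eq]
  · simp [Matrix.charmatrix_apply_ne _ _ _ h, Matrix.one_apply_ne h]

lemma rootIff (A : Matrix (Fin n) (Fin n) ℝ) (s : ℝ) :
    (A.map (Complex.ofReal)).charpoly.IsRoot (s : ℂ) ↔
      (s • (1 : Matrix (Fin n) (Fin n) ℝ) - A).det = 0 := by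
  have h1 : (A.map (Complex.ofReal)).charpoly.eval (s:ℂ)
      = ((s • (1 : Matrix (Fin n) (Fin n) ℝ) - A).det : ℝ) := by
    rw [evalCharpoly]
    have : ((s:ℂ) • (1 : Matrix (Fin n) (Fin n) ℂ) - A.map Complex.ofReal)
        = (s • (1 : Matrix (Fin n) (Fin n) ℝ) - A).map (Complex.ofReal) := by
      ext i j
      by_cases h : i = j <;>
        simp [Matrix.map_apply, Matrix.one_apply, h]
    rw [this]
    exact (RingHom.map_det Complex.ofRealHom (s • 1 - A)).symm
  constructor
  · intro h
    have := h1.symm.trans h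
    exact_mod_cast this
  · intro h
    unfold Polynomial.IsRoot
    rw [h1, h]
    simp

/-- Collatz–Wielandt: a positive matrix has a positive eigenvector with positive eigenvalue. -/
lemma posPerron (hn : 0 < n) (P : Matrix (Fin n) (Fin n) ℝ) (hP : ∀ i j, 0 < P i j) :
    ∃ t : ℝ, 0 < t ∧ ∃ y : Fin n → ℝ, (∀ i, 0 < y i) ∧ P *ᵥ y = t • y := by
  haveI : Nonempty (Fin n) := ⟨⟨0, hn⟩⟩
  set C : ℝ := Finset.univ.sup' Finset.univ_nonempty (fun i => ∑ j, P i j) with hC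
  have hrowC : ∀ i, ∑ j, P i j ≤ C := fun i =>
    Finset.le_sup' (f := fun i => ∑ j, P i j) (Finset.mem_univ i)
  set c : ℝ := Finset.univ.inf' Finset.univ_nonempty (fun i => ∑ j, P i j) with hc
  have hrowc : ∀ i, c ≤ ∑ j, P i j := fun i =>
    Finset.inf'_le (f := fun i => ∑ j, P i j) (Finset.mem_univ i)
  have hcpos : 0 < c := by
    obtain ⟨i, -, hi⟩ := Finset.exists_mem_eq_inf' Finset.univ_nonempty (fun i => ∑ j, P i j)
    rw [hc, hi]
    exact Finset.sum_pos (fun j _ => hP i j) Finset.univ_nonempty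
  -- the constraint set
  set K : Set (ℝ × (Fin n → ℝ)) :=
    {p | p.1 ∈ Set.Icc 0 C ∧ (∀ i, 0 ≤ p.2 i) ∧ (∑ i, p.2 i) = 1 ∧
      ∀ i, p.1 * p.2 i ≤ (P *ᵥ p.2) i} with hK
  -- helper : any member of the constraint-type inequality has p.1 ≤ C
  have bound : ∀ (s : ℝ) (u : Fin n → ℝ), (∀ i, 0 ≤ u i) → (∑ i, u i) = 1 →
      (∀ i, s * u i ≤ (P *ᵥ u) i) → s ≤ C := by
    intro s u hu hsum hcon
    obtain ⟨i₀, -, hi₀⟩ := Finset.exists_max_image Finset.univ u Finset.univ_nonempty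
    have hu0 : 0 < u i₀ := by
      by_contra h
      push_neg at h
      have hz : ∀ i, u i = 0 := fun i =>
        le_antisymm ((hi₀ i (Finset.mem_univ i)).trans h) (hu i)
      rw [Finset.sum_congr rfl fun i _ => hz i] at hsum
      simp at hsum
    have h1 : s * u i₀ ≤ (∑ j, P i₀ j) * u i₀ := by
      calc s * u i₀ ≤ (P *ᵥ u) i₀ := hcon i₀
        _ = ∑ j, P i₀ j * u j := rfl
        _ ≤ ∑ j, P i₀ j * u i₀ := Finset.sum_le_sum (fun j _ =>
            mul_le_mul_of_nonneg_left (hi₀ j (Finset.mem_univ j)) (hP i₀ j).le)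
        _ = (∑ j, P i₀ j) * u i₀ := by rw [Finset.sum_mul]
    exact le_of_mul_le_mul_right (h1.trans (mul_le_mul_of_nonneg_right (hrowC i₀) hu0.le)) hu0
  have hKc : IsCompact K := by
    have hsub : K ⊆ (Set.Icc 0 C) ×ˢ (Set.univ.pi fun _ : Fin n => Set.Icc (0:ℝ) 1) := by
      rintro ⟨s, u⟩ ⟨h1, h2, h3, -⟩
      refine ⟨h1, fun i _ => ⟨h2 i, ?_⟩⟩
      calc u i ≤ ∑ j, u j := Finset.single_le_sum (fun j _ => h2 j) (Finset.mem_univ i)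
        _ = 1 := h3
    refine IsCompact.of_isClosed_subset
      ((isCompact_Icc).prod (isCompact_univ_pi fun _ => isCompact_Icc)) ?_ hsub
    have c1 : IsClosed {p : ℝ × (Fin n → ℝ) | p.1 ∈ Set.Icc 0 C} :=
      (isClosed_Icc).preimage continuous_fst
    have c2 : IsClosed {p : ℝ × (Fin n → ℝ) | ∀ i, 0 ≤ p.2 i} := by
      have : {p : ℝ × (Fin n → ℝ) | ∀ i, 0 ≤ p.2 i}
          = ⋂ i, {p : ℝ × (Fin n → ℝ) | 0 ≤ p.2 i} := by ext; simp
      rw [this]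
      exact isClosed_iInter fun i => isClosed_le continuous_const
        ((continuous_apply i).comp continuous_snd)
    have c3 : IsClosed {p : ℝ × (Fin n → ℝ) | (∑ i, p.2 i) = 1} :=
      isClosed_eq (continuous_finset_sum _ fun i _ => (continuous_apply i).comp continuous_snd)
        continuous_const
    have c4 : IsClosed {p : ℝ × (Fin n → ℝ) | ∀ i, p.1 * p.2 i ≤ (P *ᵥ p.2) i} := by
      have : {p : ℝ × (Fin n → ℝ) | ∀ i, p.1 * p.2 i ≤ (P *ᵥ p.2) i}
          = ⋂ i, {p : ℝ × (Fin n → ℝ) | p.1 * p.2 i ≤ ∑ j, P i j * p.2 j} := by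
        ext p; simp [Matrix.mulVec, dotProduct]
      rw [this]
      refine isClosed_iInter fun i => isClosed_le ?_ ?_
      · exact continuous_fst.mul ((continuous_apply i).comp continuous_snd)
      · exact continuous_finset_sum _ fun j _ =>
          continuous_const.mul ((continuous_apply j).comp continuous_snd)
    have hKeq : K = ({p : ℝ × (Fin n → ℝ) | p.1 ∈ Set.Icc 0 C} ∩ {p | ∀ i, 0 ≤ p.2 i}) ∩
        ({p | (∑ i, p.2 i) = 1} ∩ {p | ∀ i, p.1 * p.2 i ≤ (P *ᵥ p.2) i}) := by
      ext p
      simp only [hK, Set.mem_setOf_eq, Set.mem_inter_iff]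
      tauto
    rw [hKeq]
    exact (c1.inter c2).inter (c3.inter c4)
  -- nonemptiness
  have hmemK : (c, fun _ : Fin n => (n : ℝ)⁻¹) ∈ K := by
    have hn' : (0:ℝ) < n := by exact_mod_cast hn
    refine ⟨⟨hcpos.le, le_trans (hrowc ⟨0, hn⟩) (hrowC ⟨0, hn⟩)⟩, fun i => by positivity, ?_, ?_⟩
    · simp only [Finset.sum_const, Finset.card_univ, Fintype.card_fin, nsmul_eq_mul]
      field_simp
    · intro i
      have h2 : (P *ᵥ fun _ => (n:ℝ)⁻¹) i = (∑ j, P i j) * (n:ℝ)⁻¹ := by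
        simp [Matrix.mulVec, dotProduct, Finset.sum_mul]
      rw [h2]
      exact mul_le_mul_of_nonneg_right (hrowc i) (by positivity)
  obtain ⟨⟨t, x⟩, hmem, hismax⟩ := hKc.exists_isMaxOn ⟨_, hmemK⟩ continuous_fst.continuousOn
  obtain ⟨⟨ht0, htC⟩, hx0, hxsum, hcon⟩ := hmem
  have htc : c ≤ t := hismax hmemK
  have htpos : 0 < t := lt_of_lt_of_le hcpos htc
  -- y := P *ᵥ x is positive
  obtain ⟨j₀, hj₀⟩ : ∃ j, 0 < x j := by
    by_contra h
    push_neg at h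
    have hz : ∀ i, x i = 0 := fun i => le_antisymm (h i) (hx0 i)
    rw [Finset.sum_congr rfl fun i _ => hz i] at hxsum
    simp at hxsum
  set y : Fin n → ℝ := P *ᵥ x with hy
  have hypos : ∀ i, 0 < y i := by
    intro i
    have h1 : P i j₀ * x j₀ ≤ ∑ j, P i j * x j :=
      Finset.single_le_sum (f := fun j => P i j * x j)
        (fun j _ => mul_nonneg (hP i j).le (hx0 j)) (Finset.mem_univ j₀)
    exact lt_of_lt_of_le (mul_pos (hP i j₀) hj₀) h1
  -- equality P x = t x
  have heq : ∀ i, t * x i = y i := by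
    by_contra h
    push_neg at h
    obtain ⟨i₁, hi₁⟩ := h
    have hi₁' : t * x i₁ < y i₁ := lt_of_le_of_ne (hcon i₁) hi₁
    have hz : ∀ i, 0 < (P *ᵥ y) i - t * y i := by
      intro i
      have expand : (P *ᵥ y) i - t * y i = ∑ j, P i j * (y j - t * x j) := by
        simp only [Matrix.mulVec, dotProduct, hy]
        rw [Finset.mul_sum, ← Finset.sum_sub_distrib]
        congr 1
        ext j
        ring
      rw [expand]
      have hterm : ∀ j ∈ Finset.univ, 0 ≤ P i j * (y j - t * x j) := fun j _ =>
        mul_nonneg (hP i j).le (sub_nonneg.2 (hcon j))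
      calc (0:ℝ) < P i i₁ * (y i₁ - t * x i₁) := mul_pos (hP i i₁) (sub_pos.2 hi₁')
        _ ≤ ∑ j, P i j * (y j - t * x j) :=
          Finset.single_le_sum hterm (Finset.mem_univ i₁)
    set η : ℝ := Finset.univ.inf' Finset.univ_nonempty
      (fun i => ((P *ᵥ y) i - t * y i) / y i) with hη
    have hηpos : 0 < η := by
      rw [hη]
      apply (Finset.lt_inf'_iff _).2
      intro i _
      exact div_pos (hz i) (hypos i)
    have hηy : ∀ i, η * y i ≤ (P *ᵥ y) i - t * y i := by
      intro i
      have h1 : η ≤ ((P *ᵥ y) i - t * y i) / y i :=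
        Finset.inf'_le (f := fun i => ((P *ᵥ y) i - t * y i) / y i) (Finset.mem_univ i)
      calc η * y i ≤ (((P *ᵥ y) i - t * y i) / y i) * y i :=
            mul_le_mul_of_nonneg_right h1 (hypos i).le
        _ = (P *ᵥ y) i - t * y i := by
            rw [div_mul_cancel₀ _ (hypos i).ne']
    have hsy : 0 < ∑ i, y i := Finset.sum_pos (fun i _ => hypos i) Finset.univ_nonempty
    set u : Fin n → ℝ := (∑ i, y i)⁻¹ • y with hu
    have hucon : ∀ i, (t + η) * u i ≤ (P *ᵥ u) i := by
      intro i
      have h1 : (t + η) * y i ≤ (P *ᵥ y) i := by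
        have := hηy i
        linarith
      have h2 : (P *ᵥ u) i = (∑ i, y i)⁻¹ * (P *ᵥ y) i := by
        rw [hu, Matrix.mulVec_smul]
        simp
      rw [h2, hu]
      simp only [Pi.smul_apply, smul_eq_mul]
      calc (t + η) * ((∑ i, y i)⁻¹ * y i) = (∑ i, y i)⁻¹ * ((t + η) * y i) := by ring
        _ ≤ (∑ i, y i)⁻¹ * (P *ᵥ y) i :=
          mul_le_mul_of_nonneg_left h1 (by positivity)
    have husum : (∑ i, u i) = 1 := by
      rw [hu]
      simp only [Pi.smul_apply, smul_eq_mul, ← Finset.mul_sum]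
      field_simp
    have hu0 : ∀ i, 0 ≤ u i := fun i => by
      rw [hu]
      simp only [Pi.smul_apply, smul_eq_mul]
      exact mul_nonneg (inv_nonneg.2 hsy.le) (hypos i).le
    have hmem2 : (t + η, u) ∈ K :=
      ⟨⟨(by linarith : (0:ℝ) ≤ t + η), bound _ _ hu0 husum hucon⟩, hu0, husum, hucon⟩
    have hle : t + η ≤ t := hismax hmem2
    linarith
  -- conclude : x is positive and is an eigenvector
  have hxpos : ∀ i, 0 < x i := by
    intro i
    have := heq i
    nlinarith [hypos i, htpos, hx0 i]
  refine ⟨t, htpos, x, hxpos, ?_⟩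
  funext i
  simp only [Pi.smul_apply, smul_eq_mul]
  exact (heq i).symm

lemma eig_le_bound {P : Matrix (Fin n) (Fin n) ℝ} (hP : ∀ i j, 0 ≤ P i j)
    {y : Fin n → ℝ} {t : ℝ} (hy : ∀ i, 0 < y i) (heig : P *ᵥ y = t • y)
    {Cb : ℝ} (hCb : ∀ i, ∑ j, P i j ≤ Cb) (hn : 0 < n) : t ≤ Cb := by
  haveI : Nonempty (Fin n) := ⟨⟨0, hn⟩⟩
  obtain ⟨i₀, -, hi₀⟩ := Finset.exists_max_image Finset.univ y Finset.univ_nonempty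
  have h1 : t * y i₀ = ∑ j, P i₀ j * y j := by
    have := congrFun heig i₀
    simp only [Pi.smul_apply, smul_eq_mul] at this
    rw [← this]
    rfl
  have h2 : t * y i₀ ≤ Cb * y i₀ := by
    rw [h1]
    calc ∑ j, P i₀ j * y j ≤ ∑ j, P i₀ j * y i₀ := Finset.sum_le_sum fun j _ =>
          mul_le_mul_of_nonneg_left (hi₀ j (Finset.mem_univ j)) (hP i₀ j)
      _ = (∑ j, P i₀ j) * y i₀ := by rw [Finset.sum_mul]
      _ ≤ Cb * y i₀ := mul_le_mul_of_nonneg_right (hCb i₀) (hy i₀).le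
  exact le_of_mul_le_mul_right h2 (hy i₀)

lemma r_le_t {A P : Matrix (Fin n) (Fin n) ℝ} (hA : ∀ i j, 0 ≤ A i j)
    (hAP : ∀ i j, A i j ≤ P i j) {x : Fin n → ℝ} {r : ℝ} (hx : x ≠ 0)
    (hr0 : 0 ≤ r) (hxeig : A *ᵥ x = r • x)
    {y : Fin n → ℝ} {t : ℝ} (hy : ∀ i, 0 < y i) (heig : P *ᵥ y = t • y) : r ≤ t := by
  have hn : 0 < n := by
    rcases Nat.eq_zero_or_pos n with h | h
    · exfalso; apply hx; ext i; exact absurd i.2 (by omega)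
    · exact h
  haveI : Nonempty (Fin n) := ⟨⟨0, hn⟩⟩
  obtain ⟨i₀, -, hi₀⟩ := Finset.exists_max_image Finset.univ (fun i => |x i| / y i)
    Finset.univ_nonempty
  set cc : ℝ := |x i₀| / y i₀ with hcc
  have hxb : ∀ i, |x i| ≤ cc * y i := by
    intro i
    have h1 : |x i| / y i ≤ cc := hi₀ i (Finset.mem_univ i)
    calc |x i| = (|x i| / y i) * y i := by rw [div_mul_cancel₀ _ (hy i).ne']
      _ ≤ cc * y i := mul_le_mul_of_nonneg_right h1 (hy i).le
  have hccpos : 0 < cc := by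
    obtain ⟨i, hi⟩ : ∃ i, x i ≠ 0 := by
      by_contra h
      push_neg at h
      exact hx (funext h)
    have h2 : 0 < |x i| / y i := div_pos (abs_pos.2 hi) (hy i)
    exact lt_of_lt_of_le h2 (hi₀ i (Finset.mem_univ i))
  have key : r * |x i₀| ≤ t * (cc * y i₀) := by
    have h1 : r * |x i₀| = |(A *ᵥ x) i₀| := by
      rw [hxeig]
      simp only [Pi.smul_apply, smul_eq_mul, abs_mul, abs_of_nonneg hr0]
    have h2 : |(A *ᵥ x) i₀| ≤ ∑ j, A i₀ j * |x j| := by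
      calc |(A *ᵥ x) i₀| = |∑ j, A i₀ j * x j| := rfl
        _ ≤ ∑ j, |A i₀ j * x j| := Finset.abs_sum_le_sum_abs _ _
        _ = ∑ j, A i₀ j * |x j| := by
            congr 1; ext j; rw [abs_mul, abs_of_nonneg (hA i₀ j)]
    have h3 : ∑ j, A i₀ j * |x j| ≤ ∑ j, P i₀ j * (cc * y j) := by
      refine Finset.sum_le_sum fun j _ => ?_
      calc A i₀ j * |x j| ≤ A i₀ j * (cc * y j) :=
            mul_le_mul_of_nonneg_left (hxb j) (hA i₀ j)
        _ ≤ P i₀ j * (cc * y j) := mul_le_mul_of_nonneg_right (hAP i₀ j)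
            (mul_nonneg hccpos.le (hy j).le)
    have h4 : ∑ j, P i₀ j * (cc * y j) = cc * (P *ᵥ y) i₀ := by
      simp only [Matrix.mulVec, dotProduct, Finset.mul_sum]
      congr 1; ext j; ring
    have h5 : (P *ᵥ y) i₀ = t * y i₀ := by
      have := congrFun heig i₀
      simpa using this
    rw [h1] at *
    calc |(A *ᵥ x) i₀| ≤ ∑ j, A i₀ j * |x j| := h2
      _ ≤ ∑ j, P i₀ j * (cc * y j) := h3
      _ = cc * (t * y i₀) := by rw [h4, h5]
      _ = t * (cc * y i₀) := by ring
  have hx0 : |x i₀| = cc * y i₀ := by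
    rw [hcc, div_mul_cancel₀ _ (hy i₀).ne']
  rw [hx0] at key
  have : 0 < cc * y i₀ := mul_pos hccpos (hy i₀)
  exact le_of_mul_le_mul_right (by linarith) this

lemma existsRowSum (hn : 0 < n) (A : Matrix (Fin n) (Fin n) ℝ) (hA : ∀ i j, 0 ≤ A i j)
    (r : ℝ) (hr0 : 0 ≤ r) {x : Fin n → ℝ} (hx : x ≠ 0) (hxeig : A *ᵥ x = r • x)
    (hmax' : ∀ s : ℝ, (s • (1 : Matrix (Fin n) (Fin n) ℝ) - A).det = 0 → s ≤ r) :
    ∃ B : Matrix (Fin n) (Fin n) ℝ, (∀ i j, 0 ≤ B i j) ∧ (∀ i, ∑ j, B i j = r) ∧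
      B.charpoly = A.charpoly := by
  haveI : Nonempty (Fin n) := ⟨⟨0, hn⟩⟩
  -- the perturbed positive matrices
  set P : ℕ → Matrix (Fin n) (Fin n) ℝ :=
    fun k => Matrix.of (fun i j => A i j + ((k:ℝ) + 1)⁻¹) with hPdef
  have hPpos : ∀ k i j, 0 < P k i j := fun k i j => by
    have : (0:ℝ) < ((k:ℝ) + 1)⁻¹ := by positivity
    simpa [hPdef] using add_pos_of_nonneg_of_pos (hA i j) this
  have hPA : ∀ k i j, A i j ≤ P k i j := fun k i j => by
    have : (0:ℝ) ≤ ((k:ℝ) + 1)⁻¹ := by positivity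
    simp [hPdef]
    linarith
  -- Perron data for each k
  have hper : ∀ k : ℕ, ∃ t : ℝ, 0 < t ∧ ∃ y : Fin n → ℝ, (∀ i, 0 < y i) ∧
      P k *ᵥ y = t • y := fun k => posPerron hn (P k) (hPpos k)
  choose t htpos rest using hper
  choose y hypos heig using rest
  -- uniform bound on t
  set CA : ℝ := Finset.univ.sup' Finset.univ_nonempty (fun i => ∑ j, A i j) with hCA
  have hCAb : ∀ i, ∑ j, A i j ≤ CA := fun i =>
    Finset.le_sup' (f := fun i => ∑ j, A i j) (Finset.mem_univ i)
  set Cb : ℝ := CA + n with hCb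
  have hrowP : ∀ k i, ∑ j, P k i j ≤ Cb := by
    intro k i
    have h1 : ∑ j, P k i j = (∑ j, A i j) + n * ((k:ℝ)+1)⁻¹ := by
      simp [hPdef, Finset.sum_add_distrib, Finset.card_univ, mul_comm]
    have h2 : (n:ℝ) * ((k:ℝ)+1)⁻¹ ≤ n := by
      have h3 : ((k:ℝ)+1)⁻¹ ≤ 1 := by
        rw [inv_le_one_iff₀]
        right; linarith [Nat.cast_nonneg (α := ℝ) k]
      calc (n:ℝ) * ((k:ℝ)+1)⁻¹ ≤ n * 1 :=
            mul_le_mul_of_nonneg_left h3 (Nat.cast_nonneg n)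
        _ = n := mul_one _
    rw [h1]
    have := hCAb i
    rw [hCb]
    linarith
  have htCb : ∀ k, t k ≤ Cb := fun k =>
    eig_le_bound (fun i j => (hPpos k i j).le) (hypos k) (heig k) (hrowP k) hn
  have htr : ∀ k, r ≤ t k := fun k =>
    r_le_t hA (hPA k) hx hr0 hxeig (hypos k) (heig k)
  -- the conjugated matrices
  set B : ℕ → Matrix (Fin n) (Fin n) ℝ :=
    fun k => Matrix.of (fun i j => (y k i)⁻¹ * P k i j * y k j) with hB
  have hBnn : ∀ k i j, 0 ≤ B k i j := fun k i j => by
    have := hPpos k i j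
    have h1 := hypos k i
    have h2 := hypos k j
    simp only [hB, Matrix.of_apply]
    positivity
  have hBrow : ∀ k i, ∑ j, B k i j = t k := by
    intro k i
    have h1 : ∑ j, B k i j = (y k i)⁻¹ * (P k *ᵥ y k) i := by
      simp only [hB, Matrix.of_apply, Matrix.mulVec, dotProduct, Finset.mul_sum]
      congr 1; ext j; ring
    rw [h1, heig k]
    simp only [Pi.smul_apply, smul_eq_mul]
    rw [mul_comm (t k) (y k i), inv_mul_cancel_left₀ (hypos k i).ne']
  have hBbd : ∀ k i j, B k i j ≤ Cb := by
    intro k i j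
    have h1 : B k i j ≤ ∑ j', B k i j' :=
      Finset.single_le_sum (f := fun j' => B k i j') (fun j' _ => hBnn k i j')
        (Finset.mem_univ j)
    rw [hBrow k i] at h1
    exact h1.trans (htCb k)
  -- determinant identity for each k
  have hdetk : ∀ k (s : ℝ), (s • (1 : Matrix (Fin n) (Fin n) ℝ) - B k).det
      = (s • (1 : Matrix (Fin n) (Fin n) ℝ) - P k).det := by
    intro k s
    have hfact : s • (1 : Matrix (Fin n) (Fin n) ℝ) - B k
        = Matrix.diagonal (fun i => (y k i)⁻¹) *
          (s • (1 : Matrix (Fin n) (Fin n) ℝ) - P k) * Matrix.diagonal (y k) := by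
      ext i j
      rw [Matrix.mul_diagonal, Matrix.diagonal_mul]
      by_cases h : i = j
      · subst h
        simp only [Matrix.sub_apply, Matrix.smul_apply, Matrix.one_apply_eq, hB,
          Matrix.of_apply, smul_eq_mul, mul_one]
        rw [mul_sub, sub_mul]
        congr 1
        rw [mul_comm ((y k i)⁻¹) s, mul_assoc, inv_mul_cancel₀ (hypos k i).ne', mul_one]
      · simp only [Matrix.sub_apply, Matrix.smul_apply, Matrix.one_apply_ne h, hB,
          Matrix.of_apply, smul_eq_mul, mul_zero, zero_sub, neg_mul, neg_inj]
        ring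
    rw [hfact, Matrix.det_mul, Matrix.det_mul, Matrix.det_diagonal, Matrix.det_diagonal]
    have hyne : ∀ i, y k i ≠ 0 := fun i => (hypos k i).ne'
    rw [mul_comm]
    rw [← mul_assoc, ← Finset.prod_mul_distrib]
    simp only [fun i => mul_inv_cancel₀ (hyne i)]
    simp
  -- compactness and limit
  set S : Set ((Fin n → Fin n → ℝ) × ℝ) :=
    (Set.univ.pi fun _ : Fin n => Set.univ.pi fun _ : Fin n => Set.Icc (0:ℝ) Cb) ×ˢ
      Set.Icc r Cb with hS
  have hScpt : IsCompact S :=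
    (isCompact_univ_pi fun _ => isCompact_univ_pi fun _ => isCompact_Icc).prod isCompact_Icc
  set F : ℕ → ((Fin n → Fin n → ℝ) × ℝ) := fun k => (fun i j => B k i j, t k) with hF
  have hmemS : ∀ k, F k ∈ S := by
    intro k
    refine ⟨fun i _ => fun j _ => ⟨hBnn k i j, hBbd k i j⟩, htr k, htCb k⟩
  obtain ⟨L, hLS, φ, hφ, hconv⟩ := hScpt.tendsto_subseq hmemS
  set B' : Matrix (Fin n) (Fin n) ℝ := Matrix.of L.1 with hB'
  set t' : ℝ := L.2 with ht'
  have htt : Filter.Tendsto (fun k => t (φ k)) Filter.atTop (nhds t') :=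
    (continuous_snd.tendsto L).comp hconv
  have hent : ∀ i j, Filter.Tendsto (fun k => B (φ k) i j) Filter.atTop (nhds (L.1 i j)) := by
    intro i j
    have hg : Continuous fun p : (Fin n → Fin n → ℝ) × ℝ => p.1 i j :=
      (continuous_apply j).comp ((continuous_apply i).comp continuous_fst)
    exact (hg.tendsto L).comp hconv
  -- entrywise nonnegativity of the limit
  have hBnn' : ∀ i j, 0 ≤ B' i j := fun i j =>
    ge_of_tendsto' (hent i j) fun k => hBnn (φ k) i j
  -- row sums of the limit
  have hrow' : ∀ i, ∑ j, B' i j = t' := by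
    intro i
    have h1 : Filter.Tendsto (fun k => ∑ j, B (φ k) i j) Filter.atTop (nhds (∑ j, L.1 i j)) :=
      tendsto_finset_sum _ fun j _ => hent i j
    have h2 : (fun k => ∑ j, B (φ k) i j) = fun k => t (φ k) := by
      funext k
      exact hBrow (φ k) i
    rw [h2] at h1
    exact tendsto_nhds_unique h1 htt
  -- limit of the perturbations
  have hPlim : Filter.Tendsto (fun k => P (φ k)) Filter.atTop (nhds A) := by
    apply tendsto_pi_nhds.2
    intro i
    rw [tendsto_pi_nhds]
    intro j
    have h0 : Filter.Tendsto (fun k : ℕ => ((k:ℝ) + 1)⁻¹) Filter.atTop (nhds 0) :=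
      tendsto_inv_atTop_zero.comp
        (Filter.tendsto_atTop_add_const_right _ 1 tendsto_natCast_atTop_atTop)
    have h1 : Filter.Tendsto (fun k : ℕ => (((φ k):ℝ) + 1)⁻¹) Filter.atTop (nhds 0) :=
      h0.comp hφ.tendsto_atTop
    have h2 : Filter.Tendsto (fun k => A i j + (((φ k):ℝ) + 1)⁻¹) Filter.atTop
        (nhds (A i j + 0)) := tendsto_const_nhds.add h1
    rw [add_zero] at h2
    exact h2
  -- determinant identity in the limit
  have hdet' : ∀ s : ℝ, (s • (1 : Matrix (Fin n) (Fin n) ℝ) - B').det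
      = (s • (1 : Matrix (Fin n) (Fin n) ℝ) - A).det := by
    intro s
    have hcont : Continuous fun M : Matrix (Fin n) (Fin n) ℝ =>
        (s • (1 : Matrix (Fin n) (Fin n) ℝ) - M).det :=
      (continuous_const.sub continuous_id).matrix_det
    have hBlim : Filter.Tendsto (fun k => B (φ k)) Filter.atTop (nhds B') :=
      ((continuous_fst).tendsto L).comp hconv
    have h1 : Filter.Tendsto (fun k => (s • (1 : Matrix (Fin n) (Fin n) ℝ) - B (φ k)).det)
        Filter.atTop (nhds ((s • (1 : Matrix (Fin n) (Fin n) ℝ) - B').det)) :=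
      (hcont.tendsto B').comp hBlim
    have h2 : Filter.Tendsto (fun k => (s • (1 : Matrix (Fin n) (Fin n) ℝ) - P (φ k)).det)
        Filter.atTop (nhds ((s • (1 : Matrix (Fin n) (Fin n) ℝ) - A).det)) :=
      (hcont.tendsto A).comp hPlim
    have h3 : (fun k => (s • (1 : Matrix (Fin n) (Fin n) ℝ) - B (φ k)).det)
        = fun k => (s • (1 : Matrix (Fin n) (Fin n) ℝ) - P (φ k)).det := by
      funext k
      exact hdetk (φ k) s
    rw [h3] at h1
    exact tendsto_nhds_unique h1 h2
  -- t' = r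
  have htr' : r ≤ t' := hLS.2.1
  have hrt' : t' ≤ r := by
    have hones : ((t' • (1 : Matrix (Fin n) (Fin n) ℝ) - B') *ᵥ fun _ => (1:ℝ)) = 0 := by
      funext i
      simp only [Matrix.mulVec, dotProduct, Matrix.sub_apply, Matrix.smul_apply, mul_one]
      rw [Finset.sum_sub_distrib]
      have h4 : ∑ j, t' • (1 : Matrix (Fin n) (Fin n) ℝ) i j = t' := by
        simp [Matrix.one_apply, Finset.sum_ite_eq']
      rw [h4, hrow' i]
      simp
    have hdz : (t' • (1 : Matrix (Fin n) (Fin n) ℝ) - B').det = 0 := by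
      rw [← Matrix.exists_mulVec_eq_zero_iff]
      refine ⟨fun _ => (1:ℝ), ?_, hones⟩
      intro h
      have := congrFun h ⟨0, hn⟩
      simp at this
    have := hdet' t'
    rw [hdz] at this
    exact hmax' t' this.symm
  have hteq : t' = r := le_antisymm hrt' htr'
  -- conclude
  refine ⟨B', hBnn', fun i => by rw [hrow' i, hteq], ?_⟩
  apply Polynomial.funext
  intro s
  rw [evalCharpoly, evalCharpoly, hdet' s]

set_option maxHeartbeats 1000000 in
lemma brauer (hn : 0 < n) (B : Matrix (Fin n) (Fin n) ℝ) (r ε : ℝ)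
    (hrow : ∀ i, ∑ j, B i j = r) (w : Fin n → ℝ) (hwsum : ∑ j, w j = ε) :
    (Matrix.of fun i j => B i j + w j).charpoly * (X - C r)
      = B.charpoly * (X - C (r + ε)) := by
  haveI : Nonempty (Fin n) := ⟨⟨0, hn⟩⟩
  set K := FractionRing (Polynomial ℝ)
  set φ : Polynomial ℝ →+* K := (algebraMap (Polynomial ℝ) K : Polynomial ℝ →+* K) with hφ
  have hinj : Function.Injective φ := IsFractionRing.injective (Polynomial ℝ) K
  apply hinj
  rw [_root_.map_mul, _root_.map_mul]
  set D : Matrix (Fin n) (Fin n) ℝ := Matrix.of fun i j => B i j + w j with hD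
  set MB : Matrix (Fin n) (Fin n) K := (Matrix.charmatrix B).map φ with hMB
  set MD : Matrix (Fin n) (Fin n) K := (Matrix.charmatrix D).map φ with hMD
  have hdetB : MB.det = φ B.charpoly := (RingHom.map_det φ _).symm
  have hdetD : MD.det = φ D.charpoly := (RingHom.map_det φ _).symm
  -- row sums of the characteristic matrix
  have hsum : ∀ i, ∑ j, Matrix.charmatrix B i j = X - C r := by
    intro i
    rw [← Finset.add_sum_erase _ _ (Finset.mem_univ i), Matrix.charmatrix_apply_eq]
    have h1 : ∑ j ∈ Finset.univ.erase i, Matrix.charmatrix B i j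
        = -C (∑ j ∈ Finset.univ.erase i, B i j) := by
      rw [map_sum, ← Finset.sum_neg_distrib]
      refine Finset.sum_congr rfl fun j hj => ?_
      exact Matrix.charmatrix_apply_ne _ _ _ (Ne.symm (Finset.mem_erase.1 hj).1)
    rw [h1, ← hrow i, ← Finset.add_sum_erase _ _ (Finset.mem_univ i)]
    rw [map_add]
    ring
  have hMBones : MB *ᵥ (fun _ => (1:K)) = φ (X - C r) • (fun _ => (1:K)) := by
    funext i
    simp only [Matrix.mulVec, dotProduct, mul_one, Pi.smul_apply, smul_eq_mul]
    rw [hMB]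
    simp only [Matrix.map_apply]
    rw [← map_sum, hsum i]
  -- invertibility of MB
  have hpB : B.charpoly ≠ 0 := (Matrix.charpoly_monic B).ne_zero
  have hdetBne : MB.det ≠ 0 := by
    rw [hdetB]
    intro h
    exact hpB (hinj (by simpa using h))
  have hunit : IsUnit MB.det := isUnit_iff_ne_zero.2 hdetBne
  -- decomposition
  have hdec : MD = MB + Matrix.replicateCol Unit (fun _ => (-1 : K)) *
      Matrix.replicateRow Unit (fun j => φ (C (w j))) := by
    ext i j
    rw [Matrix.add_apply, Matrix.mul_apply]
    simp only [Matrix.replicateCol_apply, Matrix.replicateRow_apply, Finset.univ_unique, Finset.sum_const,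
      Finset.card_singleton, one_smul, neg_mul, one_mul]
    rw [hMD, hMB]
    simp only [Matrix.map_apply]
    by_cases h : i = j
    · subst h
      rw [Matrix.charmatrix_apply_eq, Matrix.charmatrix_apply_eq]
      rw [hD]
      simp only [Matrix.of_apply, map_add]
      rw [map_sub, map_sub, map_add]
      ring
    · rw [Matrix.charmatrix_apply_ne _ _ _ h, Matrix.charmatrix_apply_ne _ _ _ h]
      rw [hD]
      simp only [Matrix.of_apply, map_add]
      rw [map_neg, map_neg, map_add]
      ring
  -- matrix determinant lemma
  have hdetlem : MD.det = MB.det *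
      ((1 : Matrix Unit Unit K) + Matrix.replicateRow Unit (fun j => φ (C (w j))) * MB⁻¹ *
        Matrix.replicateCol Unit (fun _ => (-1:K))).det := by
    rw [hdec]
    exact Matrix.det_add_replicateCol_mul_replicateRow hunit _ _
  have hgne : φ (X - C r) ≠ 0 := by
    intro h0
    exact Polynomial.X_sub_C_ne_zero r (hinj (by rw [h0, map_zero]))
  -- compute MB⁻¹ applied to the all-ones vector
  have hz : MB⁻¹ *ᵥ (fun _ => (1:K)) = (φ (X - C r))⁻¹ • (fun _ => (1:K)) := by
    have h1 : MB⁻¹ *ᵥ (MB *ᵥ (fun _ => (1:K))) = (fun _ => (1:K)) := by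
      rw [Matrix.mulVec_mulVec, Matrix.nonsing_inv_mul _ hunit, Matrix.one_mulVec]
    rw [hMBones, Matrix.mulVec_smul] at h1
    rw [eq_comm, inv_smul_eq_iff₀ hgne]
    exact h1.symm
  have hcolu : MB⁻¹ * Matrix.replicateCol Unit (fun _ => (-1:K))
      = Matrix.replicateCol Unit (-((φ (X - C r))⁻¹ • (fun _ => (1:K)))) := by
    erw [← Matrix.replicateCol_mulVec]
    congr 1
    have hneg : (fun _ : Fin n => (-1:K)) = -(fun _ : Fin n => (1:K)) := by funext i; simp
    rw [hneg, Matrix.mulVec_neg, hz]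
  have hinner : ((1 : Matrix Unit Unit K) + Matrix.replicateRow Unit (fun j => φ (C (w j))) * MB⁻¹ *
      Matrix.replicateCol Unit (fun _ => (-1:K))).det = 1 - (φ (X - C r))⁻¹ * φ (C ε) := by
    erw [Matrix.mul_assoc, hcolu]
    rw [Matrix.det_unique]
    rw [Matrix.add_apply, Matrix.one_apply_eq, Matrix.replicateRow_mul_replicateCol_apply]
    have hdot : (fun j => φ (C (w j))) ⬝ᵥ (-((φ (X - C r))⁻¹ • (fun _ : Fin n => (1:K))))
        = -((φ (X - C r))⁻¹ * φ (C ε)) := by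
      simp only [dotProduct, Pi.neg_apply, Pi.smul_apply, smul_eq_mul, mul_one,
        mul_neg, Finset.sum_neg_distrib]
      rw [← Finset.sum_mul, ← _root_.map_sum φ, ← _root_.map_sum C, hwsum, mul_comm]
      exact neg_mul _ _
    rw [hdot]
    ring
  -- put everything together
  rw [← hdetD, ← hdetB]
  have hX : φ (X - C (r + ε)) = φ (X - C r) - φ (C ε) := by
    rw [← _root_.map_sub]
    congr 1
    rw [C_add]
    ring
  rw [hX, hdetlem, hinner]
  have hkey : (1 - (φ (X - C r))⁻¹ * φ (C ε)) * φ (X - C r)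
      = φ (X - C r) - φ (C ε) := by
    rw [sub_mul, one_mul]
    congr 1
    rw [mul_right_comm, inv_mul_cancel₀ hgne, one_mul]
  rw [mul_assoc, hkey]

/-- Let `A` be an entrywise nonnegative real `n × n` matrix and let `r` be its Perron
eigenvalue (an eigenvalue of `A`, over `ℂ`, dominating the modulus of every eigenvalue).
Then there exists a real `k_A ≥ -r` such that for every `ε ≥ k_A` there is an entrywise
nonnegative real `n × n` matrix `D` with all row and column sums equal to `r + ε` whose
characteristic polynomial satisfies
`charpoly D * (t - r) = charpoly A * (t - (r + ε))`. -/
theorem stmt7 (n : ℕ) (A : Matrix (Fin n) (Fin n) ℝ) (hA : ∀ i j, 0 ≤ A i j) (r : ℝ)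
    (hr : (A.map (Complex.ofReal)).charpoly.IsRoot (r : ℂ))
    (hmax : ∀ μ : ℂ, (A.map (Complex.ofReal)).charpoly.IsRoot μ → ‖μ‖ ≤ r) :
    ∃ kA : ℝ, -r ≤ kA ∧ ∀ ε : ℝ, kA ≤ ε →
      ∃ D : Matrix (Fin n) (Fin n) ℝ,
        (∀ i j, 0 ≤ D i j) ∧
        (∀ i, ∑ j, D i j = r + ε) ∧
        (∀ j, ∑ i, D i j = r + ε) ∧
        D.charpoly * (X - C r) = A.charpoly * (X - C (r + ε)) := by
  rcases Nat.eq_zero_or_pos n with hn0 | hn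
  · exfalso
    subst hn0
    have h1 : (A.map Complex.ofReal).charpoly = 1 := by
      rw [Matrix.charpoly, Matrix.det_isEmpty]
    rw [Polynomial.IsRoot, h1] at hr
    simp at hr
  haveI : Nonempty (Fin n) := ⟨⟨0, hn⟩⟩
  have hr0 : 0 ≤ r := by
    have h := hmax (r:ℂ) hr
    rw [Complex.norm_real, Real.norm_eq_abs] at h
    exact (abs_nonneg r).trans h
  have hdetr : (r • (1 : Matrix (Fin n) (Fin n) ℝ) - A).det = 0 := (rootIff A r).1 hr
  obtain ⟨x, hx0, hxz⟩ := (Matrix.exists_mulVec_eq_zero_iff).2 hdetr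
  have hxeig : A *ᵥ x = r • x := by
    rw [Matrix.sub_mulVec, sub_eq_zero] at hxz
    rw [← hxz, Matrix.smul_mulVec, Matrix.one_mulVec]
  have hmax' : ∀ s : ℝ, (s • (1 : Matrix (Fin n) (Fin n) ℝ) - A).det = 0 → s ≤ r := by
    intro s hs
    have h := hmax (s:ℂ) ((rootIff A s).2 hs)
    rw [Complex.norm_real, Real.norm_eq_abs] at h
    exact (le_abs_self s).trans h
  obtain ⟨B, hBnn, hBrow, hBchar⟩ := existsRowSum hn A hA r hr0 hx0 hxeig hmax'
  set cs : Fin n → ℝ := fun j => ∑ i, B i j with hcs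
  set kA : ℝ := max (-r) (Finset.univ.sup' Finset.univ_nonempty (fun j => cs j - r)) with hkA
  refine ⟨kA, le_max_left _ _, ?_⟩
  intro ε hε
  set w : Fin n → ℝ := fun j => (r + ε - cs j) / n with hw
  have hw0 : ∀ j, 0 ≤ w j := by
    intro j
    have h1 : cs j - r ≤ kA :=
      le_max_of_le_right (Finset.le_sup' (f := fun j => cs j - r) (Finset.mem_univ j))
    have h2 : cs j - r ≤ ε := h1.trans hε
    have h3 : (0:ℝ) < n := by exact_mod_cast hn
    rw [hw]
    have : 0 ≤ r + ε - cs j := by linarith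
    positivity
  have hcssum : ∑ j, cs j = n * r := by
    rw [hcs]
    rw [Finset.sum_comm]
    rw [Finset.sum_congr rfl fun i _ => hBrow i]
    simp [Finset.card_univ, mul_comm]
  have hwsum : ∑ j, w j = ε := by
    have h3 : (n:ℝ) ≠ 0 := by
      have : (0:ℝ) < n := by exact_mod_cast hn
      exact this.ne'
    rw [hw]
    simp only
    rw [← Finset.sum_div, Finset.sum_sub_distrib, Finset.sum_const, Finset.card_univ,
      Fintype.card_fin, hcssum, nsmul_eq_mul]
    field_simp
    ring
  refine ⟨Matrix.of fun i j => B i j + w j, ?_, ?_, ?_, ?_⟩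
  · intro i j
    exact add_nonneg (hBnn i j) (hw0 j)
  · intro i
    simp only [Matrix.of_apply]
    rw [Finset.sum_add_distrib, hBrow i, hwsum]
  · intro j
    simp only [Matrix.of_apply]
    rw [Finset.sum_add_distrib, Finset.sum_const, Finset.card_univ, Fintype.card_fin,
      nsmul_eq_mul]
    have h3 : (n:ℝ) ≠ 0 := by
      have : (0:ℝ) < n := by exact_mod_cast hn
      exact this.ne'
    have h4 : (n:ℝ) * w j = r + ε - cs j := by
      rw [hw]
      field_simp
    rw [h4]
    have : ∑ i, B i j = cs j := rfl
    rw [this]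
    ring
  · rw [brauer hn B r ε hBrow w hwsum, hBchar]
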